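/- In a generalised voting game, if x_min is an O-minimal action and x_max is an O-maximal action for player i and singletons of X i are measurable, then the probability of the criticality-0 increasingly critical set satisfies Pr(O_IC_i^0) = (μ i){x_min} · (Pr(O | x_max) − Pr(O | x_min)). -/
import Mathlib


open MeasureTheory Function

theorem stmt_8
    {ι : Type*} [Fintype ι] [Nonempty ι] [DecidableEq ι]
    {X : ι → Type*} [∀ j, MeasurableSpace (X j)]
    (μ : ∀ j, Measure (X j)) [∀ j, IsProbabilityMeasure (μ j)]
    {𝒪 : Type*} [MeasurableSpace 𝒪] [MeasurableSingletonClass 𝒪]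
    (W : (∀ j, X j) → 𝒪) (hW : Measurable W)
    (O : 𝒪) (i : ι)
    (x_min : X i)
    (hmin : ∀ ω : ∀ j, X j, W (update ω i x_min) = O →
      ∀ x : X i, W (update ω i x) = O)
    (x_max : X i)
    (hmax : ∀ ω : ∀ j, X j, ∀ x : X i, W (update ω i x) = O →
      W (update ω i x_max) = O)
    [MeasurableSingletonClass (X i)]
    :
    Measure.pi μ {ω | ω i = x_min ∧ W ω ≠ O ∧ W (update ω i x_max) = O} =
      μ i {x_min} * (Measure.pi μ {ω | W (update ω i x_max) = O} - Measure.pi μ {ω | W (update ω i x_min) = O}) := by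
  classical
  -- nonemptiness of each fiber
  have hne : ∀ j, Nonempty (X j) := by
    intro j
    by_contra h
    rw [not_nonempty_iff] at h
    have h1 := measure_univ (μ := μ j)
    rw [Set.univ_eq_empty_iff.mpr h] at h1
    simp at h1
  have : Nonempty (∀ j, X j) := ⟨fun j => (hne j).some⟩
  set Smax : Set (∀ j, X j) := {ω | W (update ω i x_max) = O} with hSmax_def
  set Smin : Set (∀ j, X j) := {ω | W (update ω i x_min) = O} with hSmin_def
  have hSmax : MeasurableSet Smax :=
    (hW.comp measurable_update_left) (measurableSet_singleton O)
  have hSmin : MeasurableSet Smin :=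
    (hW.comp measurable_update_left) (measurableSet_singleton O)
  set S : Set (∀ j, X j) := Smax \ Smin with hS_def
  have hS : MeasurableSet S := hSmax.diff hSmin
  have hsub : Smin ⊆ Smax := fun ω h => hmax ω x_min h
  -- the target set is (eval i ⁻¹' {x_min}) ∩ S
  have hT : {ω | ω i = x_min ∧ W ω ≠ O ∧ W (update ω i x_max) = O}
      = ((fun ω : ∀ j, X j => ω i) ⁻¹' {x_min}) ∩ S := by
    ext ω
    simp only [Set.mem_setOf_eq, Set.mem_inter_iff, Set.mem_preimage, Set.mem_singleton_iff,
      hS_def, Set.mem_diff, hSmax_def, hSmin_def]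
    constructor
    · rintro ⟨h1, h2, h3⟩
      refine ⟨h1, h3, fun hc => h2 ?_⟩
      rwa [← h1, update_eq_self] at hc
    · rintro ⟨h1, h3, h2⟩
      refine ⟨h1, fun hc => h2 ?_, h3⟩
      show W (update ω i x_min) = O
      rwa [← h1, update_eq_self]
  set T : Set (∀ j, X j) := ((fun ω : ∀ j, X j => ω i) ⁻¹' {x_min}) ∩ S with hT_def
  have hTmeas : MeasurableSet T :=
    ((measurable_pi_apply i) (measurableSet_singleton x_min)).inter hS
  -- S does not depend on coordinate i
  have hSinv : ∀ (ω : ∀ j, X j) (x : X i), (update ω i x ∈ S ↔ ω ∈ S) := by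
    intro ω x
    simp only [hS_def, Set.mem_diff, hSmax_def, hSmin_def, Set.mem_setOf_eq, update_idem]
  have x₀ : ∀ j, X j := Classical.arbitrary _
  -- measurability of indicators
  have hTind : Measurable (T.indicator (1 : (∀ j, X j) → ENNReal)) :=
    measurable_one.indicator hTmeas
  have hSind : Measurable (S.indicator (1 : (∀ j, X j) → ENNReal)) :=
    measurable_one.indicator hS
  -- key independence computation
  have key : Measure.pi μ T = μ i {x_min} * Measure.pi μ S := by
    have hinner : (fun ω : ∀ j, X j => ∫⁻ x, T.indicator 1 (update ω i x) ∂μ i)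
        = fun ω => μ i {x_min} * S.indicator 1 ω := by
      funext ω
      by_cases hω : ω ∈ S
      · have : (fun x : X i => T.indicator (1 : (∀ j, X j) → ENNReal) (update ω i x))
            = ({x_min} : Set (X i)).indicator 1 := by
          funext x
          simp only [Set.indicator_apply, hT_def, Set.mem_inter_iff, Set.mem_preimage,
            Set.mem_singleton_iff, update_self, hSinv ω x, hω, and_true, Pi.one_apply]
        rw [this, lintegral_indicator_one (measurableSet_singleton x_min)]
        simp [hω]
      · have : (fun x : X i => T.indicator (1 : (∀ j, X j) → ENNReal) (update ω i x))
            = fun _ => 0 := by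
          funext x
          simp only [Set.indicator_apply, hT_def, Set.mem_inter_iff, Set.mem_preimage,
            Set.mem_singleton_iff, update_self, hSinv ω x, hω, and_false, if_false]
        rw [this]
        simp [hω]
    have hinner' : (fun ω : ∀ j, X j => ∫⁻ x, S.indicator 1 (update ω i x) ∂μ i)
        = S.indicator (1 : (∀ j, X j) → ENNReal) := by
      funext ω
      have : (fun x : X i => S.indicator (1 : (∀ j, X j) → ENNReal) (update ω i x))
          = fun _ => S.indicator 1 ω := by
        funext x
        simp only [Set.indicator_apply, hSinv ω x, Pi.one_apply]
      rw [this, lintegral_const]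
      simp
    calc Measure.pi μ T = ∫⁻ ω, T.indicator 1 ω ∂Measure.pi μ :=
          (lintegral_indicator_one hTmeas).symm
      _ = (∫⋯∫⁻_Finset.univ, T.indicator 1 ∂μ) x₀ := lintegral_eq_lmarginal_univ x₀
      _ = (∫⋯∫⁻_(Finset.univ.erase i),
            (fun ω => ∫⁻ x, T.indicator 1 (update ω i x) ∂μ i) ∂μ) x₀ := by
          rw [lmarginal_erase' (T.indicator 1) hTind (Finset.mem_univ i)]
      _ = (∫⋯∫⁻_(Finset.univ.erase i),
            (fun ω => μ i {x_min} * S.indicator 1 ω) ∂μ) x₀ := by rw [hinner]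
      _ = μ i {x_min} * (∫⋯∫⁻_(Finset.univ.erase i), S.indicator 1 ∂μ) x₀ := by
          simp only [lmarginal]
          exact lintegral_const_mul _ (hSind.comp measurable_updateFinset)
      _ = μ i {x_min} * (∫⋯∫⁻_(Finset.univ.erase i),
            (fun ω => ∫⁻ x, S.indicator 1 (update ω i x) ∂μ i) ∂μ) x₀ := by rw [hinner']
      _ = μ i {x_min} * (∫⋯∫⁻_Finset.univ, S.indicator 1 ∂μ) x₀ := by
          rw [← lmarginal_erase' (S.indicator 1) hSind (Finset.mem_univ i)]
      _ = μ i {x_min} * ∫⁻ ω, S.indicator 1 ω ∂Measure.pi μ := by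
          rw [← lintegral_eq_lmarginal_univ x₀]
      _ = μ i {x_min} * Measure.pi μ S := by rw [lintegral_indicator_one hS]
  have hdiff : Measure.pi μ S = Measure.pi μ Smax - Measure.pi μ Smin :=
    measure_diff hsub hSmin.nullMeasurableSet (measure_ne_top _ _)
  rw [hT, key, hdiff]
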